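/- On the region of ℝ³ where y > 0, z > 0, and x + y² > 0, the function H₂(x,y,z) = log((x + y²)/(y (yz)^{1/2})) is a first integral of the Guillot system ẋ = x² + y⁴, ẏ = xy, ż = 2y²z - xz. -/

import Mathlib

noncomputable section

/-- Points/vectors in ℝ³. -/
abbrev V3 := ℝ × ℝ × ℝ

/-- Partial derivative in the first coordinate. -/
def pd1 (f : V3 → ℝ) (p : V3) : ℝ := deriv (fun t => f (t, p.2.1, p.2.2)) p.1
/-- Partial derivative in the second coordinate. -/
def pd2 (f : V3 → ℝ) (p : V3) : ℝ := deriv (fun t => f (p.1, t, p.2.2)) p.2.1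
/-- Partial derivative in the third coordinate. -/
def pd3 (f : V3 → ℝ) (p : V3) : ℝ := deriv (fun t => f (p.1, p.2.1, t)) p.2.2

/-- Gradient of a scalar function on ℝ³. -/
def grad (f : V3 → ℝ) (p : V3) : V3 := (pd1 f p, pd2 f p, pd3 f p)

/-- Euclidean dot product on ℝ³. -/
def dot (a b : V3) : ℝ := a.1 * b.1 + a.2.1 * b.2.1 + a.2.2 * b.2.2

/-- Cross product on ℝ³. -/
def cross (a b : V3) : V3 :=
  (a.2.1 * b.2.2 - a.2.2 * b.2.1,
   a.2.2 * b.1 - a.1 * b.2.2,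
   a.1 * b.2.1 - a.2.1 * b.1)

/-- Curl of a vector field on ℝ³. -/
def curl (F : V3 → V3) (p : V3) : V3 :=
  (pd2 (fun q => (F q).2.2) p - pd3 (fun q => (F q).2.1) p,
   pd3 (fun q => (F q).1) p - pd1 (fun q => (F q).2.2) p,
   pd1 (fun q => (F q).2.1) p - pd2 (fun q => (F q).1) p)

/-- Divergence of a vector field on ℝ³. -/
def diverg (F : V3 → V3) (p : V3) : ℝ :=
  pd1 (fun q => (F q).1) p + pd2 (fun q => (F q).2.1) p + pd3 (fun q => (F q).2.2) p

/-- Jacobi–Lie bracket of vector fields on ℝ³ (componentwise `(X·∇)Y - (Y·∇)X`). -/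
def lie (X Y : V3 → V3) (p : V3) : V3 :=
  (dot (X p) (grad (fun q => (Y q).1) p) - dot (Y p) (grad (fun q => (X q).1) p),
   dot (X p) (grad (fun q => (Y q).2.1) p) - dot (Y p) (grad (fun q => (X q).2.1) p),
   dot (X p) (grad (fun q => (Y q).2.2) p) - dot (Y p) (grad (fun q => (X q).2.2) p))

/-- The Guillot vector field. -/
def vG (p : V3) : V3 :=
  (p.1 ^ 2 + p.2.1 ^ 4, p.1 * p.2.1, 2 * p.2.1 ^ 2 * p.2.2 - p.1 * p.2.2)

/-- H₂ = log((x+y²)/(y√(yz))) is a first integral of the Guillot system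
on the region y > 0, z > 0, x + y² > 0. -/
theorem stmt11 :
    ∀ p : V3, 0 < p.2.1 → 0 < p.2.2 → 0 < p.1 + p.2.1 ^ 2 →
      dot (vG p) (grad (fun q : V3 =>
        Real.log ((q.1 + q.2.1 ^ 2) / (q.2.1 * Real.sqrt (q.2.1 * q.2.2)))) p) = 0 := by
  rintro ⟨x, y, z⟩ hy hz hx
  dsimp only at hy hz hx
  simp only [dot, grad, vG, pd1, pd2, pd3]
  have hc : (0:ℝ) < y * Real.sqrt (y * z) := by positivity
  have d1 : deriv (fun t => Real.log ((t + y ^ 2) / (y * Real.sqrt (y * z)))) x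
      = 1 / (x + y ^ 2) := by
    have h1 : HasDerivAt (fun t : ℝ => (t + y ^ 2) / (y * Real.sqrt (y * z)))
        (1 / (y * Real.sqrt (y * z))) x := ((hasDerivAt_id x).add_const _).div_const _
    have h := h1.log (by positivity)
    rw [h.deriv]
    field_simp
  have d2 : deriv (fun t => Real.log ((x + t ^ 2) / (t * Real.sqrt (t * z)))) y
      = 2 * y / (x + y ^ 2) - 3 / (2 * y) := by
    have hopen : IsOpen {t : ℝ | 0 < t ∧ 0 < x + t ^ 2} := by
      apply IsOpen.inter
      · exact isOpen_lt continuous_const continuous_id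
      · exact isOpen_lt continuous_const (continuous_const.add (continuous_pow 2))
    have key : (fun t => Real.log ((x + t ^ 2) / (t * Real.sqrt (t * z))))
        =ᶠ[nhds y] (fun t => Real.log (x + t ^ 2) - (3/2) * Real.log t - (1/2) * Real.log z) := by
      filter_upwards [hopen.mem_nhds ⟨hy, hx⟩] with t ht
      obtain ⟨ht1, ht2⟩ := ht
      rw [Real.log_div (by positivity) (by positivity), Real.sqrt_mul ht1.le,
        Real.log_mul (by positivity) (by positivity),
        Real.log_mul (by positivity) (by positivity),
        Real.log_sqrt ht1.le, Real.log_sqrt hz.le]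
      ring
    rw [key.deriv_eq]
    have ha : HasDerivAt (fun t : ℝ => x + t ^ 2) (2 * y) y := by
      simpa using (hasDerivAt_pow 2 y).const_add x
    have h1 : HasDerivAt
        (fun t : ℝ => Real.log (x + t ^ 2) - (3/2) * Real.log t - (1/2) * Real.log z)
        (2 * y / (x + y ^ 2) - (3/2) * y⁻¹ - 0) y := by
      exact ((ha.log (by positivity)).sub
        ((Real.hasDerivAt_log hy.ne').const_mul _)).sub (hasDerivAt_const _ _)
    rw [h1.deriv]
    field_simp
    ring
  have d3 : deriv (fun t => Real.log ((x + y ^ 2) / (y * Real.sqrt (y * t)))) z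
      = -(1 / (2 * z)) := by
    have key : (fun t => Real.log ((x + y ^ 2) / (y * Real.sqrt (y * t))))
        =ᶠ[nhds z] (fun t => Real.log (x + y ^ 2) - (3/2) * Real.log y - (1/2) * Real.log t) := by
      filter_upwards [(isOpen_lt continuous_const continuous_id).mem_nhds hz] with t ht
      simp only [id_eq] at ht
      rw [Real.log_div (by positivity) (by positivity), Real.sqrt_mul hy.le,
        Real.log_mul (by positivity) (by positivity),
        Real.log_mul (by positivity) (by positivity),
        Real.log_sqrt hy.le, Real.log_sqrt (le_of_lt ht)]
      ring
    rw [key.deriv_eq]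
    have h1 : HasDerivAt
        (fun t : ℝ => Real.log (x + y ^ 2) - (3/2) * Real.log y - (1/2) * Real.log t)
        (0 - (1/2) * z⁻¹) z := by
      exact (hasDerivAt_const _ _).sub ((Real.hasDerivAt_log hz.ne').const_mul _)
    rw [h1.deriv]
    field_simp
    ring
  rw [d1, d2, d3]
  field_simp
  ring
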